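/- Let C be a real number with 0 ≤ C ≤ 128/9 and let λ satisfy 0 ≤ λ ≤ 2C. Define β(t) = −C·t·(3/2 − √(2t)) for t ∈ (0,1/2]. Then β ∈ C²_loc((0,1/2];ℝ), β satisfies β''(t) ≥ β(t)²/(8t²) + λ/2 for all t ∈ (0,1/2], β'(1/2) = 0, β(t) ≤ 0 for all t ∈ (0,1/2], lim_{t→0⁺} β(t)/√t = 0, lim_{t→0⁺} |β(t)|/t < +∞, and lim_{t→0⁺} β(t) = 0. In particular, β is an upper solution of Problem 2. -/

import Mathlib

open Real Filter Set Topology intervalIntegral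

/-- `u` is twice continuously differentiable on every compact subinterval
`[a,b] ⊂ (0, 1/2]`. -/
def C2loc (u : ℝ → ℝ) : Prop :=
  ∀ a b : ℝ, 0 < a → b ≤ 1/2 → ContDiffOn ℝ 2 u (Set.Icc a b)

private theorem hd1 (C : ℝ) (t : ℝ) (ht : 0 < t) :
    HasDerivAt (fun t => -C * t * (3/2 - Real.sqrt (2 * t)))
      (3*C/2 * (Real.sqrt (2*t) - 1)) t := by
  have h2t : (0:ℝ) < 2*t := by linarith
  have hs : Real.sqrt (2*t) > 0 := Real.sqrt_pos.mpr h2t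
  have hsq : Real.sqrt (2*t) * Real.sqrt (2*t) = 2*t := Real.mul_self_sqrt h2t.le
  have h1 : HasDerivAt (fun x : ℝ => Real.sqrt (2*x)) (1 / (2 * Real.sqrt (2*t)) * 2) t :=
    (Real.hasDerivAt_sqrt (ne_of_gt h2t)).comp t (by simpa using (hasDerivAt_id t).const_mul 2)
  have h2 : HasDerivAt (fun x : ℝ => -C * x) (-C) t := by
    simpa using (hasDerivAt_id t).const_mul (-C)
  have h3 := h2.mul ((hasDerivAt_const t ((3:ℝ)/2)).sub h1)
  refine h3.congr_deriv ?_
  simp only [Pi.sub_apply]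
  set s := Real.sqrt (2*t) with hsdef
  field_simp
  linear_combination (-C) * hsq

private theorem hd2 (C : ℝ) (t : ℝ) (ht : 0 < t) :
    HasDerivAt (fun t => 3*C/2 * (Real.sqrt (2*t) - 1))
      (3*C/2 / Real.sqrt (2*t)) t := by
  have h2t : (0:ℝ) < 2*t := by linarith
  have hs : Real.sqrt (2*t) > 0 := Real.sqrt_pos.mpr h2t
  have h1 : HasDerivAt (fun x : ℝ => Real.sqrt (2*x)) (1 / (2 * Real.sqrt (2*t)) * 2) t :=
    (Real.hasDerivAt_sqrt (ne_of_gt h2t)).comp t (by simpa using (hasDerivAt_id t).const_mul 2)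
  have h3 := ((h1.sub_const 1).const_mul (3*C/2))
  refine h3.congr_deriv ?_
  set s := Real.sqrt (2*t) with hsdef
  field_simp

private theorem keyineq (C lam s : ℝ) (hC0 : 0 ≤ C) (hC1 : C ≤ 128 / 9)
    (hlam1 : lam ≤ 2 * C) (hs0 : 0 < s) (hs1 : s ≤ 1) :
    C^2 * (3/2 - s)^2 / 8 + lam / 2 ≤ (3*C/2) / s := by
  rw [le_div_iff₀ hs0]
  have h1 : 0 ≤ C * ((128/9 - C) * (s * (3/2 - s)^2)) :=
    mul_nonneg hC0 (mul_nonneg (by linarith) (by positivity))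
  have h2 : 0 ≤ C * ((4*s - 3)^2 * (3 - 2*s)) :=
    mul_nonneg hC0 (mul_nonneg (sq_nonneg _) (by linarith))
  have h3 : lam * s ≤ 2 * C * s := by nlinarith
  nlinarith [h1, h2, h3]

theorem stmt17 (C lam : ℝ) (hC0 : 0 ≤ C) (hC1 : C ≤ 128 / 9)
    (hlam0 : 0 ≤ lam) (hlam1 : lam ≤ 2 * C)
    (β : ℝ → ℝ) (hβdef : ∀ t : ℝ, β t = -C * t * (3/2 - Real.sqrt (2 * t))) :
    C2loc β ∧
    (∀ t ∈ Set.Ioc (0:ℝ) (1/2),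
      deriv (deriv β) t ≥ β t ^ 2 / (8 * t ^ 2) + lam / 2) ∧
    deriv β (1/2) = 0 ∧
    (∀ t ∈ Set.Ioc (0:ℝ) (1/2), β t ≤ 0) ∧
    Tendsto (fun t => β t / Real.sqrt t) (𝓝[>] (0:ℝ)) (𝓝 0) ∧
    (∃ L : ℝ, Tendsto (fun t => |β t| / t) (𝓝[>] (0:ℝ)) (𝓝 L)) ∧
    Tendsto β (𝓝[>] (0:ℝ)) (𝓝 0) := by
  have hβ : β = fun t => -C * t * (3/2 - Real.sqrt (2 * t)) := funext hβdef
  -- first derivative of β on Ioi 0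
  have hd1' : ∀ t : ℝ, 0 < t → HasDerivAt β (3*C/2 * (Real.sqrt (2*t) - 1)) t := by
    intro t ht; rw [hβ]; exact hd1 C t ht
  have hderiv : ∀ t : ℝ, 0 < t → deriv β t = 3*C/2 * (Real.sqrt (2*t) - 1) := fun t ht =>
    (hd1' t ht).deriv
  refine ⟨?_, ?_, ?_, ?_, ?_, ?_, ?_⟩
  · -- C2loc
    intro a b ha hb
    rw [hβ]
    intro x hx
    have hx0 : 0 < x := lt_of_lt_of_le ha hx.1
    have h2 : ContDiffAt ℝ 2 Real.sqrt (2*x) := Real.contDiffAt_sqrt (by positivity)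
    have h1 : ContDiffAt ℝ 2 (fun t : ℝ => 2*t) x := contDiffAt_const.mul contDiffAt_id
    exact (((contDiffAt_const.mul contDiffAt_id).mul
      (contDiffAt_const.sub (h2.comp x h1)))).contDiffWithinAt
  · -- differential inequality
    intro t ht
    obtain ⟨ht0, ht1⟩ := ht
    have h2t : (0:ℝ) < 2*t := by linarith
    have hs : Real.sqrt (2*t) > 0 := Real.sqrt_pos.mpr h2t
    have hs1 : Real.sqrt (2*t) ≤ 1 := by
      rw [show (1:ℝ) = Real.sqrt 1 by simp]
      exact Real.sqrt_le_sqrt (by linarith)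
    have hsq : Real.sqrt (2*t) * Real.sqrt (2*t) = 2*t := Real.mul_self_sqrt h2t.le
    have heq : deriv β =ᶠ[𝓝 t] (fun x => 3*C/2 * (Real.sqrt (2*x) - 1)) := by
      filter_upwards [Ioi_mem_nhds ht0] with x hx
      exact hderiv x hx
    have hd2' : deriv (deriv β) t = 3*C/2 / Real.sqrt (2*t) := by
      rw [heq.deriv_eq]
      exact (hd2 C t ht0).deriv
    rw [hd2', hβdef t]
    have key := keyineq C lam (Real.sqrt (2*t)) hC0 hC1 hlam1 hs hs1
    have hval : (-C * t * (3/2 - Real.sqrt (2*t)))^2 / (8 * t^2)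
        = C^2 * (3/2 - Real.sqrt (2*t))^2 / 8 := by
      field_simp
    rw [hval]
    exact key
  · -- deriv β (1/2) = 0
    have := hderiv (1/2) (by norm_num)
    rw [this]
    norm_num
  · -- β ≤ 0
    intro t ht
    rw [hβdef t]
    have h2t : (0:ℝ) < 2*t := by linarith [ht.1]
    have hs1 : Real.sqrt (2*t) ≤ 1 := by
      rw [show (1:ℝ) = Real.sqrt 1 by simp]
      exact Real.sqrt_le_sqrt (by linarith [ht.2])
    have h4 : 0 ≤ C * t * (3/2 - Real.sqrt (2*t)) :=
      mul_nonneg (mul_nonneg hC0 ht.1.le) (by linarith)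
    linarith
  · -- β t / sqrt t → 0
    have hf : Continuous (fun t : ℝ => -C * Real.sqrt t * (3/2 - Real.sqrt (2*t))) := by
      continuity
    have h0 : Tendsto (fun t : ℝ => -C * Real.sqrt t * (3/2 - Real.sqrt (2*t)))
        (𝓝[>] (0:ℝ)) (𝓝 0) := by
      have := (hf.tendsto 0).mono_left (nhdsWithin_le_nhds (s := Set.Ioi (0:ℝ)))
      simpa using this
    refine h0.congr' ?_
    filter_upwards [self_mem_nhdsWithin] with t (ht : 0 < t)
    have hst : Real.sqrt t * Real.sqrt t = t := Real.mul_self_sqrt ht.le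
    have hsne : Real.sqrt t ≠ 0 := ne_of_gt (Real.sqrt_pos.mpr ht)
    rw [hβdef t, eq_div_iff hsne]
    linear_combination (-C * (3/2 - Real.sqrt (2*t))) * hst
  · -- |β t|/t has a limit
    have hf : Continuous (fun t : ℝ => C * |3/2 - Real.sqrt (2*t)|) := by
      continuity
    have h0 : Tendsto (fun t : ℝ => C * |3/2 - Real.sqrt (2*t)|)
        (𝓝[>] (0:ℝ)) (𝓝 (C * |3/2 - Real.sqrt (2*0)|)) :=
      (hf.tendsto 0).mono_left nhdsWithin_le_nhds
    refine ⟨_, h0.congr' ?_⟩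
    filter_upwards [self_mem_nhdsWithin] with t (ht : 0 < t)
    rw [hβdef t]
    rw [abs_mul, abs_mul, abs_neg, abs_of_nonneg hC0, abs_of_pos ht]
    have htne : t ≠ 0 := ht.ne'
    field_simp
  · -- β → 0
    have hf : Continuous (fun t : ℝ => -C * t * (3/2 - Real.sqrt (2*t))) := by
      continuity
    have h0 : Tendsto β (𝓝 (0:ℝ)) (𝓝 (β 0)) := by
      rw [hβ]; exact hf.tendsto 0
    have : β 0 = 0 := by rw [hβdef]; ring
    rw [this] at h0
    exact h0.mono_left (nhdsWithin_le_nhds (s := Set.Ioi (0:ℝ)))
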